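/- arXiv:1904.11312 — 3 statements merged into one kernel-verified Lean document; each statement's English description precedes it below -/
import Mathlib

section
/- Let π : E → B be a functor which is a cocartesian fibration (Grothendieck opfibration) of categories such that B has colimits of shape I, each fiber E_b has colimits of shape I, and each pushforward functor f_! : E_b → E_{b'} preserves colimits of shape I. Then E has colimits of shape I, and the colimit of p : I → E is computed by: forming the colimit b∞ of π∘p in B, pushing each p(i) forward to the fiber over b∞ along the colimit cocone, and taking the colimit of the resulting diagram in E_{b∞}. -/
open CategoryTheory CategoryTheory.Limits

universe w w' v u

noncomputable section

variable {B : Type u} [Category.{v} B] (F : B ⥤ Cat.{v, u})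
variable {I : Type w} [Category.{w'} I]

variable [HasColimitsOfShape I B]

/-- Given a diagram `p : I ⥤ Grothendieck F`, the diagram in the fiber over the
colimit of the underlying diagram obtained by pushing each `p(i)` forward along
the colimit cocone. -/
@[simps]
def pushedDiagram (p : I ⥤ Grothendieck F) :
    I ⥤ F.obj (colimit (p ⋙ Grothendieck.forget F)) where
  obj i := (F.map (colimit.ι (p ⋙ Grothendieck.forget F) i)).toFunctor.obj (p.obj i).fiber
  map {i j} φ :=
    eqToHom (by rw [← colimit.w (p ⋙ Grothendieck.forget F) φ, F.map_comp]; rfl) ≫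
      (F.map (colimit.ι (p ⋙ Grothendieck.forget F) j)).toFunctor.map ((p.map φ).fiber)
  map_id i := by
    have h : p.map (𝟙 i) = 𝟙 (p.obj i) := p.map_id i
    rw [Grothendieck.congr h, Grothendieck.id_fiber]
    simp only [eqToHom_trans]
    have key : ∀ {C D : Type u} [Category.{v} C] [Category.{v} D] (G : C ⥤ D) {X Y : C}
        (h1 : G.obj Y = G.obj X) (h2 : X = Y), eqToHom h1 ≫ G.map (eqToHom h2) = 𝟙 _ := by
      intros; subst_vars; simp
    exact key _ _ _
  map_comp {i j k} φ ψ := by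
    have hb : (p.map ψ).base ≫ colimit.ι (p ⋙ Grothendieck.forget F) k
        = colimit.ι (p ⋙ Grothendieck.forget F) j :=
      colimit.w (p ⋙ Grothendieck.forget F) ψ
    have h : (F.map (colimit.ι (p ⋙ Grothendieck.forget F) j)).toFunctor
        = (F.map ((p.map ψ).base)).toFunctor ⋙ (F.map (colimit.ι (p ⋙ Grothendieck.forget F) k)).toFunctor := by
      exact (congrArg (fun f => (F.map f).toFunctor) hb.symm).trans
        (congrArg Cat.Hom.toFunctor (F.map_comp _ _))
    rw [Grothendieck.congr (p.map_comp φ ψ), Grothendieck.comp_fiber,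
      Functor.congr_hom h ((p.map φ).fiber)]
    have key : ∀ {C D : Type u} [Category.{v} C] [Category.{v} D] (G : C ⥤ D) {A B₁ B₂ : D}
        {X X' Y Z W : C} (e : X = X') (e' : X' = Y) (f : Y ⟶ Z) (g : Z ⟶ W)
        (h1 : A = G.obj X) (h2 : A = B₁) (h3 : B₁ = G.obj Y) (h4 : G.obj Z = B₂)
        (h5 : B₂ = G.obj Z),
        eqToHom h1 ≫ G.map (eqToHom e ≫ eqToHom e' ≫ f ≫ g) =
          (eqToHom h2 ≫ eqToHom h3 ≫ G.map f ≫ eqToHom h4) ≫ eqToHom h5 ≫ G.map g := by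
      intros; subst_vars; simp
    exact key (F.map (colimit.ι (p ⋙ Grothendieck.forget F) k)).toFunctor _ _ _ _ _ _ _ _ _

lemma groth_hA {C : Cat.{v, u}} {G : C ⟶ C} (hG : G = 𝟙 C) {X0 X1 X Y Z W : C}
    {e : X0 = X1} {e' : X1 = Y} {A : Y ⟶ Z} {ι : Z ⟶ W} {e4 : X = Y} {e3 : X0 = G.toFunctor.obj X}
    {e5 : G.toFunctor.obj W = W} :
    eqToHom e ≫ eqToHom e' ≫ A ≫ ι = eqToHom e3 ≫ G.toFunctor.map ((eqToHom e4 ≫ A) ≫ ι) ≫ eqToHom e5 := by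
  subst hG; subst e4; simp

lemma groth_hC {C D E : Cat.{v, u}} {J : C ⟶ D} {G : D ⟶ E} {K : C ⟶ E} (hK : J ≫ G = K)
    {x y : C} {f : x ⟶ y} {P R T T' : E} {a : P = G.toFunctor.obj (J.toFunctor.obj x)}
    {b : G.toFunctor.obj (J.toFunctor.obj y) = K.toFunctor.obj y} {Sj : K.toFunctor.obj y ⟶ R}
    {c : P = T} {Si : T ⟶ R} {d : T' = K.toFunctor.obj x} {e : T' = T}
    (hw : eqToHom d ≫ K.toFunctor.map f ≫ Sj = eqToHom e ≫ Si) :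
    (eqToHom a ≫ G.toFunctor.map (J.toFunctor.map f)) ≫ eqToHom b ≫ Sj = eqToHom c ≫ Si := by
  subst hK
  have : Si = eqToHom e.symm ≫ eqToHom d ≫ (J ≫ G).toFunctor.map f ≫ Sj := by
    rw [hw]; simp
  subst this; subst e; subst c
  simp [Cat.Hom.comp_obj]

lemma groth_hE {C : Type u} [Category.{v} C] {A X Y Y' Z W T : C} {M : X ⟶ Y} {mf : Y ⟶ Z}
    {S : W ⟶ Z} {e1 : A = X} {e2 : Y = Y'} {e3 : Y' = Y} {e4 : A = W} {e5 : X = T} {e6 : T = W}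
    (h : M ≫ mf = eqToHom e5 ≫ eqToHom e6 ≫ S) :
    (eqToHom e1 ≫ M ≫ eqToHom e2) ≫ eqToHom e3 ≫ mf = eqToHom e4 ≫ S := by
  subst e1 e2 e5 e6; simp [h]

section Aux

variable [∀ b : B, HasColimitsOfShape I (F.obj b)] (p : I ⥤ Grothendieck F)

/-- The candidate colimit cocone. -/
@[simps]
def grothCocone : Cocone p where
  pt := ⟨colimit (p ⋙ Grothendieck.forget F), colimit (pushedDiagram F p)⟩
  ι :=
    { app := fun i =>
        { base := colimit.ι (p ⋙ Grothendieck.forget F) i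
          fiber := colimit.ι (pushedDiagram F p) i }
      naturality := fun i j φ => by
        have hw := colimit.w (pushedDiagram F p) φ
        simp only [pushedDiagram_map] at hw
        fapply Grothendieck.ext
        · simp
          exact colimit.w (p ⋙ Grothendieck.forget F) φ
        · dsimp
          rw [← hw]
          exact groth_hA (F.map_id _) }

variable {p}

/-- Base component of the descent morphism. -/
def grothDescBase (s : Cocone p) : colimit (p ⋙ Grothendieck.forget F) ⟶ s.pt.base :=
  colimit.desc _ ((Grothendieck.forget F).mapCocone s)

lemma grothDescBase_fac (s : Cocone p) (i : I) :
    colimit.ι (p ⋙ Grothendieck.forget F) i ≫ grothDescBase F s = (s.ι.app i).base :=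
  colimit.ι_desc _ _

lemma groth_key (s : Cocone p) (i : I) :
    (F.map (grothDescBase F s)).toFunctor.obj
      ((F.map (colimit.ι (p ⋙ Grothendieck.forget F) i)).toFunctor.obj (p.obj i).fiber) =
    (F.map ((s.ι.app i).base)).toFunctor.obj (p.obj i).fiber := by
  exact (congrArg (fun G => G.toFunctor.obj (p.obj i).fiber) (F.map_comp (colimit.ι (p ⋙ Grothendieck.forget F) i) (grothDescBase F s))).symm.trans
    (congrArg (fun f => (F.map f).toFunctor.obj (p.obj i).fiber) (grothDescBase_fac F s i))

lemma groth_map_eq (s : Cocone p) (i : I) :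
    F.map (colimit.ι (p ⋙ Grothendieck.forget F) i) ≫ F.map (grothDescBase F s)
      = F.map ((s.ι.app i).base) := by
  rw [← F.map_comp, grothDescBase_fac]; rfl


@[simps]
def grothDescCocone (s : Cocone p) :
    Cocone (pushedDiagram F p ⋙ (F.map (grothDescBase F s)).toFunctor) where
  pt := s.pt.fiber
  ι :=
    { app := fun i => eqToHom (groth_key F s i) ≫ (s.ι.app i).fiber
      naturality := fun i j φ => by
        have hw := Grothendieck.congr (s.w φ)
        rw [Grothendieck.comp_fiber] at hw
        simp only [Functor.comp_obj, Functor.comp_map, pushedDiagram_map, Functor.map_comp,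
          eqToHom_map, Category.assoc, Functor.const_obj_obj, Functor.const_obj_map,
          Category.comp_id]
        erw [Functor.map_comp, eqToHom_map]
        exact groth_hC (groth_map_eq F s j) hw }

variable (hpres : ∀ {b b' : B} (f : b ⟶ b'), PreservesColimitsOfShape I (F.map f).toFunctor)

def grothDesc (s : Cocone p) : (grothCocone F p).pt ⟶ s.pt where
  base := grothDescBase F s
  fiber :=
    haveI := hpres (grothDescBase F s)
    (isColimitOfPreserves (F.map (grothDescBase F s)).toFunctor
      (colimit.isColimit (pushedDiagram F p))).desc (grothDescCocone F s)

@[simp] lemma grothDesc_base (s : Cocone p) :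
    (grothDesc F hpres s).base = grothDescBase F s := rfl

lemma grothDesc_fac (s : Cocone p) (i : I) :
    (F.map (grothDescBase F s)).toFunctor.map (colimit.ι (pushedDiagram F p) i) ≫
      (grothDesc F hpres s).fiber = eqToHom (groth_key F s i) ≫ (s.ι.app i).fiber := by
  haveI := hpres (grothDescBase F s)
  exact (isColimitOfPreserves (F.map (grothDescBase F s)).toFunctor
    (colimit.isColimit (pushedDiagram F p))).fac (grothDescCocone F s) i

def grothIsColimit : IsColimit (grothCocone F p) where
  desc s := grothDesc F hpres s
  fac s i := by
    fapply Grothendieck.ext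
    · exact grothDescBase_fac F s i
    · rw [Grothendieck.comp_fiber]
      simp only [grothCocone_ι_app_fiber, grothCocone_ι_app_base, grothDesc_base]
      erw [grothDesc_fac F hpres s i]
      erw [eqToHom_trans_assoc, eqToHom_trans_assoc, eqToHom_refl, Category.id_comp]
  uniq s m hm := by
    haveI := hpres (grothDescBase F s)
    have hb : m.base = grothDescBase F s := by
      apply colimit.hom_ext; intro i
      rw [grothDescBase_fac F s i, ← congrArg Grothendieck.Hom.base (hm i)]
      rfl
    fapply Grothendieck.ext
    · exact hb
    · apply (isColimitOfPreserves (F.map (grothDescBase F s)).toFunctor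
        (colimit.isColimit (pushedDiagram F p))).hom_ext
      intro k
      have hfib := Grothendieck.congr (hm k)
      rw [Grothendieck.comp_fiber] at hfib
      simp only [grothCocone_ι_app_fiber, grothCocone_ι_app_base] at hfib
      rw [eqToHom_comp_iff] at hfib
      simp only [Functor.mapCocone_ι_app, colimit.cocone_ι]
      conv_rhs => rw [grothDesc_fac F hpres s k]
      conv_lhs => rw [Functor.congr_hom
        (show (F.map (grothDescBase F s)).toFunctor = (F.map m.base).toFunctor by rw [hb]; rfl)
        (colimit.ι (pushedDiagram F p) k)]
      exact groth_hE hfib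

end Aux

/-- If `π : Grothendieck F → B` is the cocartesian fibration corresponding to
`F : B ⥤ Cat`, `B` has colimits of shape `I`, each fiber has colimits of shape `I`
and each pushforward functor preserves them, then the total category has colimits
of shape `I`, and the colimit of `p : I ⥤ Grothendieck F` is computed by taking
the colimit `b∞` of the underlying diagram, pushing `p` forward to the fiber over
`b∞` along the colimit cocone, and taking the colimit there. -/
theorem grothendieck_hasColimitsOfShape_and_formula
    [∀ b : B, HasColimitsOfShape I (F.obj b)]
    (hpres : ∀ {b b' : B} (f : b ⟶ b'), PreservesColimitsOfShape I (F.map f).toFunctor) :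
    HasColimitsOfShape I (Grothendieck F) ∧
    ∀ p : I ⥤ Grothendieck F, ∃ c : Cocone p, Nonempty (IsColimit c) ∧
      Nonempty (c.pt ≅
        ⟨colimit (p ⋙ Grothendieck.forget F), colimit (pushedDiagram F p)⟩) := by
  refine ⟨⟨fun p => HasColimit.mk ⟨grothCocone F p, grothIsColimit F hpres⟩⟩, fun p =>
    ⟨grothCocone F p, ⟨grothIsColimit F hpres⟩, ⟨Iso.refl _⟩⟩⟩

end
end

section
/- Let π : E → A × B be a functor of categories such that the composite π_A : E → A is a Grothendieck fibration whose cartesian morphisms map to isomorphisms under the projection to B, and for every a ∈ A the induced functor on fibers E_a → B is a Grothendieck opfibration. Then the composite π_B : E → B is a Grothendieck opfibration, and a morphism of E lying in a fiber E_a which is opcartesian for E_a → B is opcartesian for π_B. -/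
open CategoryTheory

universe v₁ v₂ v₃ u₁ u₂ u₃

section

variable {E : Type u₁} [Category.{v₁} E] {A : Type u₂} [Category.{v₂} A]
  {B : Type u₃} [Category.{v₃} B]

/-- A morphism `φ : x ⟶ y` is `q`-cartesian. -/
def IsCartesianMor {D : Type*} [Category D] (q : E ⥤ D) {x y : E} (φ : x ⟶ y) : Prop :=
  ∀ {z : E} (ψ : z ⟶ y) (g : q.obj z ⟶ q.obj x), q.map ψ = g ≫ q.map φ →
    ∃! χ : z ⟶ x, q.map χ = g ∧ χ ≫ φ = ψ

/-- A morphism `φ : x ⟶ y` is `q`-opcartesian. -/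
def IsOpcartesianMor {D : Type*} [Category D] (q : E ⥤ D) {x y : E} (φ : x ⟶ y) : Prop :=
  ∀ {z : E} (ψ : x ⟶ z) (g : q.obj y ⟶ q.obj z), q.map ψ = q.map φ ≫ g →
    ∃! χ : y ⟶ z, q.map χ = g ∧ φ ≫ χ = ψ

/-- `q : E ⥤ D` is a Grothendieck fibration: every morphism of `D` with target in
the image admits a cartesian lift. -/
def IsGrothendieckFibration {D : Type*} [Category D] (q : E ⥤ D) : Prop :=
  ∀ (y : E) (d : D) (f : d ⟶ q.obj y),
    ∃ (x : E) (φ : x ⟶ y) (h : q.obj x = d),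
      IsCartesianMor q φ ∧ q.map φ = eqToHom h ≫ f

/-- `q : E ⥤ D` is a Grothendieck opfibration: every morphism of `D` with source in
the image admits an opcartesian lift. -/
def IsGrothendieckOpfibration {D : Type*} [Category D] (q : E ⥤ D) : Prop :=
  ∀ (x : E) (d : D) (f : q.obj x ⟶ d),
    ∃ (y : E) (φ : x ⟶ y) (h : q.obj y = d),
      IsOpcartesianMor q φ ∧ q.map φ ≫ eqToHom h = f

lemma key_opcart (p : E ⥤ A) (q : E ⥤ B) (h1 : IsGrothendieckFibration p)
    (h2 : ∀ {x y : E} (φ : x ⟶ y), IsCartesianMor p φ → IsIso (q.map φ))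
    (a : A) (x y : Functor.Fiber p a) (φ : x ⟶ y)
    (hφ : IsOpcartesianMor ((Functor.Fiber.fiberInclusion : Functor.Fiber p a ⥤ E) ⋙ q) φ) :
    IsOpcartesianMor q (Functor.Fiber.fiberInclusion.map φ) := by
  intro z ψ g hg
  -- cartesian lift of p.map ψ
  obtain ⟨w, θ, hw, hθcart, hθmap⟩ := h1 z a (eqToHom x.2.symm ≫ p.map ψ)
  -- factor ψ through θ
  obtain ⟨ψ', ⟨hψ'A, hψ'fac⟩, hψ'uniq⟩ := hθcart ψ (eqToHom x.2 ≫ eqToHom hw.symm)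
    (by rw [hθmap]; simp [Functor.Fiber.fiberInclusion])
  haveI : IsIso (q.map θ) := h2 θ hθcart
  haveI hLψ' : Functor.IsHomLift p (𝟙 a) ψ' :=
    IsHomLift.of_fac' p _ _ x.2 hw (by rw [hψ'A]; simp)
  have hβ : q.map ψ' ≫ q.map θ = q.map (Functor.Fiber.fiberInclusion.map φ) ≫ g := by
    rw [← Functor.map_comp, hψ'fac]; exact hg
  obtain ⟨χ', ⟨hχ'B, hχ'fac⟩, hχ'uniq⟩ :=
    hφ (z := Functor.Fiber.mk hw) (⟨ψ', hLψ'⟩ : x ⟶ Functor.Fiber.mk hw)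
      (g ≫ @inv _ _ _ _ (q.map θ) this)
      (by show q.map ψ' = q.map (Functor.Fiber.fiberInclusion.map φ) ≫ g ≫ inv (q.map θ)
          rw [← Category.assoc]; exact (IsIso.eq_comp_inv _).mpr hβ)
  have hχ'B' : q.map (Functor.Fiber.fiberInclusion.map χ') = g ≫ inv (q.map θ) := hχ'B
  have hχ'fac' : Functor.Fiber.fiberInclusion.map φ ≫ Functor.Fiber.fiberInclusion.map χ' = ψ' :=
    congrArg Subtype.val hχ'fac
  refine ⟨Functor.Fiber.fiberInclusion.map χ' ≫ θ, ⟨?_, ?_⟩, ?_⟩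
  · erw [Functor.map_comp, hχ'B']; simp
  · erw [← Category.assoc, hχ'fac', hψ'fac]
  · rintro χ₀ ⟨hχ₀B, hχ₀fac⟩
    have hpφ : p.map (Functor.Fiber.fiberInclusion.map φ) = eqToHom x.2 ≫ eqToHom y.2.symm := by
      have := IsHomLift.fac' p (𝟙 a) (Functor.Fiber.fiberInclusion.map φ)
      rw [this]; simp; rfl
    have hpχ₀ : p.map χ₀ = (eqToHom y.2 ≫ eqToHom hw.symm) ≫ p.map θ := by
      have h : p.map (Functor.Fiber.fiberInclusion.map φ) ≫ p.map χ₀ = p.map ψ := by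
        rw [← Functor.map_comp, hχ₀fac]
      rw [hpφ] at h
      rw [hθmap]
      refine Eq.trans (?_ : p.map χ₀ = eqToHom y.2 ≫ eqToHom x.2.symm ≫
            ((eqToHom x.2 ≫ eqToHom y.2.symm) ≫ p.map χ₀)) ?_
      · simp; rfl
      · erw [h]; simp [Functor.Fiber.fiberInclusion]
    obtain ⟨χ₀', ⟨hA0, hfac0⟩, _⟩ := hθcart χ₀ (eqToHom y.2 ≫ eqToHom hw.symm) hpχ₀
    haveI hLχ₀' : Functor.IsHomLift p (𝟙 a) χ₀' :=
      IsHomLift.of_fac' p _ _ y.2 hw (by rw [hA0]; simp)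
    -- φ.1 ≫ χ₀' is the unique factorization of ψ
    have hcomp : Functor.Fiber.fiberInclusion.map φ ≫ χ₀' = ψ' := by
      apply hψ'uniq
      constructor
      · rw [Functor.map_comp, hpφ, hA0]; simp [Functor.Fiber.fiberInclusion]
      · rw [Category.assoc, hfac0, hχ₀fac]
    have hqχ₀' : q.map χ₀' = g ≫ inv (q.map θ) := by
      apply (IsIso.eq_comp_inv _).mpr
      rw [← Functor.map_comp, hfac0, hχ₀B]
    have : (⟨χ₀', hLχ₀'⟩ : y ⟶ Functor.Fiber.mk hw) = χ' := by
      apply hχ'uniq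
      exact ⟨hqχ₀', Functor.Fiber.hom_ext hcomp⟩
    have hval : χ₀' = Functor.Fiber.fiberInclusion.map χ' := congrArg Subtype.val this
    erw [← hfac0, hval]; rfl



/-- Let `π : E ⥤ A × B` be such that the composite `π_A : E ⥤ A` is a Grothendieck
fibration whose cartesian morphisms map to isomorphisms in `B`, and such that for
every `a : A` the induced functor on fibers `E_a ⥤ B` is a Grothendieck
opfibration. Then `π_B : E ⥤ B` is a Grothendieck opfibration, and every morphism
of a fiber `E_a` which is opcartesian for `E_a ⥤ B` is opcartesian for `π_B`. -/
theorem projection_opfibration (π : E ⥤ A × B)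
    (h1 : IsGrothendieckFibration (π ⋙ CategoryTheory.Prod.fst A B))
    (h2 : ∀ {x y : E} (φ : x ⟶ y), IsCartesianMor (π ⋙ CategoryTheory.Prod.fst A B) φ →
      IsIso ((π ⋙ CategoryTheory.Prod.snd A B).map φ))
    (h3 : ∀ a : A, IsGrothendieckOpfibration
      ((Functor.Fiber.fiberInclusion :
          Functor.Fiber (π ⋙ CategoryTheory.Prod.fst A B) a ⥤ E) ⋙
        π ⋙ CategoryTheory.Prod.snd A B)) :
    IsGrothendieckOpfibration (π ⋙ CategoryTheory.Prod.snd A B) ∧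
    ∀ (a : A) (x y : Functor.Fiber (π ⋙ CategoryTheory.Prod.fst A B) a) (φ : x ⟶ y),
      IsOpcartesianMor
        ((Functor.Fiber.fiberInclusion :
            Functor.Fiber (π ⋙ CategoryTheory.Prod.fst A B) a ⥤ E) ⋙
          π ⋙ CategoryTheory.Prod.snd A B) φ →
      IsOpcartesianMor (π ⋙ CategoryTheory.Prod.snd A B)
        (Functor.Fiber.fiberInclusion.map φ) := by
  refine ⟨?_, fun a x y φ hφ => key_opcart _ _ h1 @h2 a x y φ hφ⟩
  intro x b f
  obtain ⟨y', φ, hy, hopc, hfac⟩ := h3 ((π ⋙ CategoryTheory.Prod.fst A B).obj x)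
    (⟨x, rfl⟩ : Functor.Fiber (π ⋙ CategoryTheory.Prod.fst A B)
      ((π ⋙ CategoryTheory.Prod.fst A B).obj x)) b f
  exact ⟨y'.1, Functor.Fiber.fiberInclusion.map φ, hy,
    key_opcart _ _ h1 @h2 _ _ _ φ hopc, hfac⟩

end
end

section
/- Let C be a category with pushouts and finite coproducts, viewed as monoidal under coproduct. Given canonical-monoid objects A, B, C and cospans A → M ← B and B → N ← C (viewed as bimodules), the relative tensor product M ⊗_B N (the coequalizer of the two maps M ⊔ B ⊔ N ⇉ M ⊔ N) is canonically isomorphic to the pushout M ⊔_B N of the cospan composite; hence composition of bimodules in (C, ⊔) agrees with composition of cospans by pushout. -/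
open CategoryTheory CategoryTheory.Limits

section
variable {C : Type*} [Category C] [HasFiniteCoproducts C] [HasPushouts C]
variable {A B X M N : C}

/-- The first of the two canonical maps `M ⊔ B ⊔ N ⇉ M ⊔ N`: it acts on `M`,
sending the summand `B` into `M` via `b₁`. -/
noncomputable def actOnM (b₁ : B ⟶ M) : M ⨿ (B ⨿ N) ⟶ M ⨿ N :=
  coprod.desc coprod.inl (coprod.desc (b₁ ≫ coprod.inl) coprod.inr)

/-- The second of the two canonical maps `M ⊔ B ⊔ N ⇉ M ⊔ N`: it acts on `N`,
sending the summand `B` into `N` via `b₂`. -/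
noncomputable def actOnN (b₂ : B ⟶ N) : M ⨿ (B ⨿ N) ⟶ M ⨿ N :=
  coprod.desc coprod.inl (coprod.desc (b₂ ≫ coprod.inr) coprod.inr)

/-- For cospans `A → M ← B` and `B → N ← X` in a category with finite coproducts
and pushouts (viewed as bimodules over the canonical monoid structures), the
relative tensor product `M ⊗_B N`, i.e. the coequalizer of the two maps
`M ⊔ B ⊔ N ⇉ M ⊔ N`, is canonically the pushout `M ⊔_B N`: the evident cofork
with vertex the pushout is a colimit cofork. -/
theorem relativeTensor_eq_pushout (a : A ⟶ M) (b₁ : B ⟶ M) (b₂ : B ⟶ N) (c : X ⟶ N) :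
    Nonempty (IsColimit (Cofork.ofπ (f := actOnM (N := N) b₁) (g := actOnN (M := M) b₂)
      (coprod.desc (pushout.inl b₁ b₂) (pushout.inr b₁ b₂))
      (by
        apply coprod.hom_ext
        · simp [actOnM, actOnN, coprod.inl_desc, coprod.inr_desc, coprod.inl_desc_assoc, coprod.inr_desc_assoc]
        · apply coprod.hom_ext
          · simp [actOnM, actOnN, pushout.condition, coprod.inl_desc, coprod.inr_desc, coprod.inl_desc_assoc, coprod.inr_desc_assoc]
          · simp [actOnM, actOnN, coprod.inl_desc, coprod.inr_desc, coprod.inl_desc_assoc, coprod.inr_desc_assoc]))) := by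
  refine ⟨Cofork.IsColimit.mk _ (fun s => pushout.desc (coprod.inl ≫ s.π) (coprod.inr ≫ s.π) ?_) (fun s => ?_) (fun s m hm => ?_)⟩
  · have h := s.condition
    have h2 := (coprod.inl (X := B) (Y := N) ≫ coprod.inr) ≫= h
    simpa [actOnM, actOnN, coprod.inl_desc, coprod.inr_desc, coprod.inl_desc_assoc, coprod.inr_desc_assoc] using h2
  · apply coprod.hom_ext <;> simp [coprod.inl_desc, coprod.inr_desc, coprod.inl_desc_assoc, coprod.inr_desc_assoc, pushout.inl_desc, pushout.inr_desc]
  · apply pushout.hom_ext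
    · simpa [coprod.inl_desc, coprod.inr_desc, coprod.inl_desc_assoc, coprod.inr_desc_assoc, pushout.inl_desc, pushout.inr_desc] using coprod.inl ≫= hm
    · simpa [coprod.inl_desc, coprod.inr_desc, coprod.inl_desc_assoc, coprod.inr_desc_assoc, pushout.inl_desc, pushout.inr_desc] using coprod.inr ≫= hm

end
end
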